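/- Let A₁,…,A_m ∈ GL(2,ℤ) (m ≥ 1) be hyperbolic matrices (no eigenvalue of modulus 1). Then exactly one of the following alternatives holds: either there exist indices i ≠ j with A_i·A_j ≠ A_j·A_i; or the A_i pairwise commute, and in that case there exist a hyperbolic matrix B ∈ GL(2,ℤ), nonzero integers n₁,…,n_m, and signs ε₁,…,ε_m ∈ {+1, −1} such that A_i = ε_i·B^{n_i} for every i = 1,…,m. -/

import Mathlib

noncomputable section

/-- A matrix in `GL(2,ℤ)` (represented as a unit of the ring of integer `2×2`
matrices) is hyperbolic if its characteristic polynomial has no complex root of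
modulus `1`. -/
def IsHyperbolicGL2 (B : (Matrix (Fin 2) (Fin 2) ℤ)ˣ) : Prop :=
  ∀ z : ℂ, (((B : Matrix (Fin 2) (Fin 2) ℤ)).map (Int.cast : ℤ → ℂ)).charpoly.IsRoot z →
    ‖z‖ ≠ 1

namespace HGL55
open Matrix Polynomial

abbrev M2 := Matrix (Fin 2) (Fin 2) ℤ

theorem charpoly_root_iff (M : Matrix (Fin 2) (Fin 2) ℂ) (z : ℂ) :
    M.charpoly.IsRoot z ↔ z^2 - M.trace * z + M.det = 0 := by
  have h : M.charpoly.eval z = z^2 - M.trace * z + M.det := by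
    rw [Matrix.charpoly]
    have := RingHom.map_det (evalRingHom z) (charmatrix M)
    simp only [RingHom.mapMatrix_apply, coe_evalRingHom] at this
    rw [this]
    rw [Matrix.det_fin_two, Matrix.trace_fin_two, Matrix.det_fin_two]
    simp [charmatrix_apply_eq, charmatrix_apply_ne]
    ring
  rw [Polynomial.IsRoot, h]

variable (U : M2ˣ)

def tZ : ℤ := (U : M2).trace
def dZ : ℤ := (U : M2).det
def disc : ℤ := tZ U ^ 2 - 4 * dZ U

/-- roots of the complex charpoly of an integer matrix -/
theorem root_iff (M : M2) (z : ℂ) :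
    (M.map (Int.cast : ℤ → ℂ)).charpoly.IsRoot z ↔
      z^2 - (M.trace : ℂ) * z + (M.det : ℂ) = 0 := by
  rw [charpoly_root_iff]
  have h1 : (M.map (Int.cast : ℤ → ℂ)).trace = (M.trace : ℂ) := by
    rw [Matrix.trace_fin_two, Matrix.trace_fin_two]; push_cast; simp [Matrix.map_apply]
  have h2 : (M.map (Int.cast : ℤ → ℂ)).det = (M.det : ℂ) := by
    rw [Matrix.det_fin_two, Matrix.det_fin_two]; push_cast; simp [Matrix.map_apply]
  rw [h1, h2]

theorem hyp_root (hU : IsHyperbolicGL2 U) (z : ℂ)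
    (hz : z^2 - (tZ U : ℂ) * z + (dZ U : ℂ) = 0) : ‖z‖ ≠ 1 :=
  hU z ((root_iff (U : M2) z).mpr hz)

theorem dZ_unit : dZ U = 1 ∨ dZ U = -1 := by
  have : IsUnit ((U : M2).det) := by
    have : IsUnit (U : M2) := ⟨U, rfl⟩
    exact (Matrix.isUnit_iff_isUnit_det _).mp this
  exact Int.isUnit_iff.mp this

theorem disc_pos (hU : IsHyperbolicGL2 U) : 0 < disc U := by
  by_contra h
  push_neg at h
  have hd : (0:ℝ) ≤ 4 * (dZ U : ℝ) - (tZ U : ℝ)^2 := by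
    have : (disc U : ℝ) ≤ 0 := by exact_mod_cast h
    simp only [disc] at this; push_cast at this; linarith
  obtain ⟨w, hw2⟩ : ∃ w : ℝ, w^2 = (4 * (dZ U:ℝ) - (tZ U:ℝ)^2)/4 :=
    ⟨Real.sqrt ((4 * (dZ U:ℝ) - (tZ U:ℝ)^2)/4), Real.sq_sqrt (by linarith)⟩
  set z : ℂ := Complex.mk ((tZ U : ℝ)/2) w with hz
  have hzre : z.re = (tZ U : ℝ)/2 := rfl
  have hzim : z.im = w := rfl
  have hroot : z^2 - (tZ U : ℂ) * z + (dZ U : ℂ) = 0 := by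
    apply Complex.ext
    · simp only [Complex.add_re, Complex.sub_re, Complex.mul_re, Complex.intCast_re,
        Complex.intCast_im, pow_two, Complex.zero_re, hzre, hzim]
      nlinarith [hw2]
    · simp only [Complex.add_im, Complex.sub_im, Complex.mul_im, Complex.intCast_re,
        Complex.intCast_im, pow_two, Complex.zero_im, hzre, hzim]
      ring
  have habs : ‖z‖ ^ 2 = (dZ U : ℝ) := by
    rw [Complex.sq_norm, Complex.normSq_apply, hzre, hzim]
    nlinarith [hw2]
  have hne := hyp_root U hU z hroot
  have hdpos : (0:ℝ) ≤ ((dZ U:ℤ):ℝ) := by rw [← habs]; positivity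
  have hd1 : dZ U = 1 := by
    rcases dZ_unit U with h1 | h1
    · exact h1
    · exfalso; rw [h1] at hdpos; norm_num at hdpos
  rw [hd1] at habs; push_cast at habs
  apply hne
  have h0 : (0:ℝ) ≤ ‖z‖ := norm_nonneg _
  nlinarith [habs]


theorem int_root_absurd (hU : IsHyperbolicGL2 U) (p : ℤ)
    (hp : p^2 - tZ U * p + dZ U = 0) : False := by
  have hq : p * (tZ U - p) = dZ U := by ring_nf; linarith [hp]
  have habs := hyp_root U hU (p : ℂ) (by exact_mod_cast congrArg (Int.cast : ℤ → ℂ) hp)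
  rw [Complex.norm_intCast] at habs
  have h1 : p.natAbs * (tZ U - p).natAbs = 1 := by
    have := congrArg Int.natAbs hq
    rw [Int.natAbs_mul] at this
    rcases dZ_unit U with h | h <;> rw [h] at this <;> simpa using this
  have hp1 : p.natAbs = 1 := Nat.eq_one_of_mul_eq_one_right h1
  apply habs
  have habs1 : |p| = 1 := by rw [Int.abs_eq_natAbs, hp1]; norm_num
  rw [← Int.cast_abs, habs1]
  norm_num

theorem disc_not_square (hU : IsHyperbolicGL2 U) : ¬ IsSquare (disc U) := by
  rintro ⟨r, hr⟩
  -- t² - r² = 4δ, t and r have the same parity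
  have key : tZ U ^ 2 - r^2 = 4 * dZ U := by simp only [disc] at hr; linarith [hr]
  have hev : Even (tZ U ^ 2 - r ^ 2) := ⟨2 * dZ U, by linarith⟩
  have hiff : Even (tZ U) ↔ Even r := by
    have h2 := Int.even_sub.mp hev
    rwa [Int.even_pow' (by norm_num), Int.even_pow' (by norm_num)] at h2
  have hpar : (2:ℤ) ∣ (tZ U + r) := (Int.even_add.mpr hiff).two_dvd
  obtain ⟨p, hpf⟩ := hpar
  have hr' : r = 2*p - tZ U := by linarith
  have hq : p^2 - tZ U * p + dZ U = 0 := by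
    rw [hr'] at key; ring_nf at key ⊢; linarith
  exact int_root_absurd U hU p hq

def sd : ℝ := Real.sqrt (disc U)
def lam : ℝ := ((tZ U : ℝ) + sd U)/2
def lam' : ℝ := ((tZ U : ℝ) - sd U)/2

theorem sd_pos (hU : IsHyperbolicGL2 U) : 0 < sd U :=
  Real.sqrt_pos.mpr (by exact_mod_cast disc_pos U hU)

theorem sd_sq (hU : IsHyperbolicGL2 U) : sd U ^ 2 = (disc U : ℝ) :=
  Real.sq_sqrt (by exact_mod_cast (disc_pos U hU).le)

theorem sd_irr (hU : IsHyperbolicGL2 U) : Irrational (sd U) :=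
  (irrational_sqrt_intCast_iff_of_nonneg (by exact_mod_cast (disc_pos U hU).le)).mpr
    (disc_not_square U hU)

theorem lam_add (hU : IsHyperbolicGL2 U) : lam U + lam' U = (tZ U : ℝ) := by
  simp only [lam, lam']; ring

theorem lam_sub : lam U - lam' U = sd U := by simp only [lam, lam']; ring

theorem lam_mul (hU : IsHyperbolicGL2 U) : lam U * lam' U = (dZ U : ℝ) := by
  have h := sd_sq U hU
  simp only [lam, lam', disc] at *
  push_cast at h ⊢
  nlinarith [h]

theorem lam_irr (hU : IsHyperbolicGL2 U) : Irrational (lam U) := by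
  intro ⟨q, hq⟩
  apply sd_irr U hU
  refine ⟨2*q - tZ U, ?_⟩
  have : sd U = 2 * lam U - (tZ U : ℝ) := by simp only [lam]; ring
  rw [this, ← hq]; push_cast; ring

theorem lam_sq (hU : IsHyperbolicGL2 U) :
    lam U ^ 2 = (tZ U : ℝ) * lam U - (dZ U : ℝ) := by
  have h1 := lam_add U hU
  have h2 := lam_mul U hU
  have : lam U ^2 - (lam U + lam' U) * lam U + lam U * lam' U = 0 := by ring
  rw [h1, h2] at this; linarith

theorem abs_lam_ne_one (hU : IsHyperbolicGL2 U) : |lam U| ≠ 1 := by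
  have hroot : ((lam U : ℂ))^2 - (tZ U : ℂ) * (lam U : ℂ) + (dZ U : ℂ) = 0 := by
    have := lam_sq U hU
    push_cast
    rw [show ((lam U : ℂ))^2 = ((lam U ^2 : ℝ) : ℂ) by push_cast; ring, this]
    push_cast; ring
  have := hyp_root U hU _ hroot
  rwa [Complex.norm_real, Real.norm_eq_abs] at this

theorem abs_lam'_ne_one (hU : IsHyperbolicGL2 U) : |lam' U| ≠ 1 := by
  have hsq : lam' U ^ 2 = (tZ U : ℝ) * lam' U - (dZ U : ℝ) := by
    have h1 := lam_add U hU
    have h2 := lam_mul U hU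
    have : lam' U ^2 - (lam U + lam' U) * lam' U + lam U * lam' U = 0 := by ring
    rw [h1, h2] at this; linarith
  have hroot : ((lam' U : ℂ))^2 - (tZ U : ℂ) * (lam' U : ℂ) + (dZ U : ℂ) = 0 := by
    push_cast
    rw [show ((lam' U : ℂ))^2 = ((lam' U ^2 : ℝ) : ℂ) by push_cast; ring, hsq]
    push_cast; ring
  have := hyp_root U hU _ hroot
  rwa [Complex.norm_real, Real.norm_eq_abs] at this

theorem lam_ne_zero (hU : IsHyperbolicGL2 U) : lam U ≠ 0 := by
  intro h
  have := lam_mul U hU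
  rw [h, zero_mul] at this
  rcases dZ_unit U with h1 | h1 <;> rw [h1] at this <;> norm_num at this

theorem lam'_ne_zero (hU : IsHyperbolicGL2 U) : lam' U ≠ 0 := by
  intro h
  have := lam_mul U hU
  rw [h, mul_zero] at this
  rcases dZ_unit U with h1 | h1 <;> rw [h1] at this <;> norm_num at this



def Mr (M : M2) : Matrix (Fin 2) (Fin 2) ℝ := M.map (Int.cast : ℤ → ℝ)

theorem Mr_mul (M N : M2) : Mr (M * N) = Mr M * Mr N := by
  ext i j
  simp only [Mr, Matrix.map_apply, Matrix.mul_apply, Fin.sum_univ_two]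
  push_cast; ring

theorem not_scalar (hU : IsHyperbolicGL2 U) :
    ¬ ((U:M2) 0 1 = 0 ∧ (U:M2) 1 0 = 0 ∧ (U:M2) 0 0 = (U:M2) 1 1) := by
  rintro ⟨hb, hc, had⟩
  have h := disc_pos U hU
  simp only [disc, tZ, dZ, Matrix.trace_fin_two, Matrix.det_fin_two, hb, hc, had] at h
  nlinarith [h]

/-- Any integer matrix commuting with `U` is a rational combination of `1` and `U`. -/
theorem exists_decomp (hU : IsHyperbolicGL2 U) (M : M2)
    (hcomm : M * (U:M2) = (U:M2) * M) :
    ∃ x y : ℚ, Mr M = (x:ℝ) • 1 + (y:ℝ) • Mr (U:M2) := by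
  set a := (U:M2) 0 0 with ha
  set b := (U:M2) 0 1 with hb
  set c := (U:M2) 1 0 with hc
  set d := (U:M2) 1 1 with hd
  set p := M 0 0 with hp
  set q := M 0 1 with hq
  set r := M 1 0 with hr
  set s := M 1 1 with hs
  have e1 : q * c = b * r := by
    have h0 := congrFun (congrFun hcomm 0) 0
    simp only [Matrix.mul_apply, Fin.sum_univ_two] at h0
    rw [← ha, ← hb, ← hc, ← hp, ← hq, ← hr] at h0
    linarith [h0]
  have e2 : p * b + q * d = a * q + b * s := by
    have h0 := congrFun (congrFun hcomm 0) 1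
    simp only [Matrix.mul_apply, Fin.sum_univ_two] at h0
    rw [← ha, ← hb, ← hd, ← hp, ← hq, ← hs] at h0
    linarith [h0]
  have e3 : r * a + s * c = c * p + d * r := by
    have h0 := congrFun (congrFun hcomm 1) 0
    simp only [Matrix.mul_apply, Fin.sum_univ_two] at h0
    rw [← ha, ← hc, ← hd, ← hp, ← hr, ← hs] at h0
    linarith [h0]
  have e1R : (q:ℝ) * c = (b:ℝ) * r := by exact_mod_cast e1
  have e2R : (p:ℝ) * b + (q:ℝ) * d = (a:ℝ) * q + (b:ℝ) * s := by exact_mod_cast e2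
  have e3R : (r:ℝ) * a + (s:ℝ) * c = (c:ℝ) * p + (d:ℝ) * r := by exact_mod_cast e3
  have entry : ∀ (x y : ℚ), ((x:ℝ) = p - y * a) → ((y:ℝ) * b = q) → ((y:ℝ) * c = r)
      → ((x:ℝ) + y * d = s) → Mr M = (x:ℝ) • 1 + (y:ℝ) • Mr (U:M2) := by
    intro x y h1 h2 h3 h4
    simp only [ha, hb, hc, hd, hp, hq, hr, hs] at h1 h2 h3 h4
    ext i j
    fin_cases i <;> fin_cases j <;>
      simp only [Mr, Matrix.map_apply, Matrix.add_apply, Matrix.smul_apply, Matrix.one_apply,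
        smul_eq_mul] <;>
      norm_num <;>
      linarith [h1, h2, h3, h4]
  by_cases hbz : b = 0
  · by_cases hcz : c = 0
    · have hadz : a ≠ d := by
        intro h
        exact not_scalar U hU ⟨hbz, hcz, by rw [← hb, ← hc, ← ha, ← hd] at *; exact h⟩
      have hadR : ((a:ℚ) - d) ≠ 0 := by
        intro h; apply hadz; exact_mod_cast sub_eq_zero.mp h
      refine ⟨(p:ℚ) - ((p:ℚ) - s)/((a:ℚ)-d) * a, ((p:ℚ) - s)/((a:ℚ)-d), entry _ _ ?_ ?_ ?_ ?_⟩
      · push_cast; ring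
      · have : q * (d - a) = 0 := by rw [hbz] at e2; linarith [e2]
        have hq0 : q = 0 := by
          rcases mul_eq_zero.mp this with h | h
          · exact h
          · exfalso; apply hadz; linarith [h]
        rw [hbz, hq0]; push_cast; ring
      · have : r * (a - d) = 0 := by rw [hcz] at e3; linarith [e3]
        have hr0 : r = 0 := by
          rcases mul_eq_zero.mp this with h | h
          · exact h
          · exfalso; apply hadz; linarith [h]
        rw [hcz, hr0]; push_cast; ring
      · have hadRR : ((a:ℝ) - (d:ℝ)) ≠ 0 := sub_ne_zero.mpr (by exact_mod_cast hadz)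
        push_cast
        field_simp
        ring
    · -- b = 0, c ≠ 0
      have hcR : ((c:ℚ)) ≠ 0 := by exact_mod_cast hcz
      refine ⟨(p:ℚ) - (r:ℚ)/(c:ℚ) * a, (r:ℚ)/(c:ℚ), entry _ _ ?_ ?_ ?_ ?_⟩
      · push_cast; ring
      · have hq0 : q = 0 := by
          rw [hbz] at e1; simp at e1
          rcases e1 with h | h
          · exact h
          · exact absurd h hcz
        rw [hbz, hq0]; push_cast; ring
      · push_cast; field_simp
      · push_cast; field_simp; linarith [e3R]
  · -- b ≠ 0
    have hbR : ((b:ℚ)) ≠ 0 := by exact_mod_cast hbz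
    refine ⟨(p:ℚ) - (q:ℚ)/(b:ℚ) * a, (q:ℚ)/(b:ℚ), entry _ _ ?_ ?_ ?_ ?_⟩
    · push_cast; ring
    · push_cast; field_simp
    · push_cast; field_simp; linarith [e1R]
    · push_cast; field_simp; linarith [e2R]

/-- linear independence of 1 and U over ℚ inside real matrices -/
theorem indep (hU : IsHyperbolicGL2 U) (x y : ℚ)
    (h : (x:ℝ) • (1 : Matrix (Fin 2) (Fin 2) ℝ) + (y:ℝ) • Mr (U:M2) = 0) :
    x = 0 ∧ y = 0 := by
  have h01 := congrFun (congrFun h 0 :) 1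
  have h10 := congrFun (congrFun h 1 :) 0
  have h00 := congrFun (congrFun h 0 :) 0
  have h11 := congrFun (congrFun h 1 :) 1
  simp only [Matrix.add_apply, Matrix.smul_apply, Matrix.one_apply, Mr, Matrix.map_apply,
    Matrix.zero_apply, smul_eq_mul] at h01 h10 h00 h11
  norm_num at h01 h10 h00 h11
  by_cases hy : y = 0
  · refine ⟨?_, hy⟩
    rw [hy] at h00; push_cast at h00; simpa using h00
  · exfalso
    apply not_scalar U hU
    refine ⟨?_, ?_, ?_⟩
    · rcases h01 with h | h
      · exact absurd h hy
      · exact h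
    · rcases h10 with h | h
      · exact absurd h hy
      · exact h
    · have hyR : (y:ℝ) ≠ 0 := by exact_mod_cast hy
      have : (((U:M2) 0 0 : ℤ) : ℝ) = (((U:M2) 1 1 : ℤ) : ℝ) := by
        have hx1 : (x:ℝ) = - y * (U:M2) 0 0 := by linarith [h00]
        have hx2 : (x:ℝ) = - y * (U:M2) 1 1 := by linarith [h11]
        rw [hx1] at hx2
        exact mul_left_cancel₀ hyR (by linarith [hx2] : (y:ℝ) * ((U:M2) 0 0 : ℝ) = (y:ℝ) * ((U:M2) 1 1 : ℝ))
      exact_mod_cast this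

theorem uniq_decomp (hU : IsHyperbolicGL2 U) (M : M2) (x y x' y' : ℚ)
    (h1 : Mr M = (x:ℝ) • 1 + (y:ℝ) • Mr (U:M2))
    (h2 : Mr M = (x':ℝ) • 1 + (y':ℝ) • Mr (U:M2)) : x = x' ∧ y = y' := by
  have h : ((x - x' : ℚ) : ℝ) • (1 : Matrix (Fin 2) (Fin 2) ℝ)
      + ((y - y' : ℚ) : ℝ) • Mr (U:M2) = 0 := by
    push_cast
    rw [sub_smul, sub_smul]
    rw [h1] at h2
    abel_nf
    abel_nf at h2
    rw [← sub_eq_zero] at h2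
    rw [← h2]
    abel
  obtain ⟨hx, hy⟩ := indep U hU _ _ h
  constructor
  · linarith [sub_eq_zero.mp (by exact_mod_cast hx : x - x' = 0)]
  · linarith [sub_eq_zero.mp (by exact_mod_cast hy : y - y' = 0)]



open scoped Classical in
def co (M : M2) : ℚ × ℚ :=
  if h : ∃ p : ℚ × ℚ, Mr M = (p.1:ℝ) • 1 + (p.2:ℝ) • Mr (U:M2) then h.choose else 0

theorem co_eq (hU : IsHyperbolicGL2 U) (M : M2) (x y : ℚ)
    (hxy : Mr M = (x:ℝ) • 1 + (y:ℝ) • Mr (U:M2)) : co U M = (x, y) := by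
  have h : ∃ p : ℚ × ℚ, Mr M = (p.1:ℝ) • 1 + (p.2:ℝ) • Mr (U:M2) := ⟨(x,y), hxy⟩
  rw [co, dif_pos h]
  obtain ⟨h1, h2⟩ := uniq_decomp U hU M _ _ x y h.choose_spec hxy
  exact Prod.ext h1 h2

theorem co_spec (hU : IsHyperbolicGL2 U) (M : M2) (hcomm : M * (U:M2) = (U:M2) * M) :
    Mr M = (((co U M).1 : ℝ)) • 1 + (((co U M).2 : ℝ)) • Mr (U:M2) := by
  obtain ⟨x, y, hxy⟩ := exists_decomp U hU M hcomm
  rw [co_eq U hU M x y hxy]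
  exact hxy

def phi (M : M2) : ℝ := ((co U M).1 : ℝ) + ((co U M).2 : ℝ) * lam U
def phi' (M : M2) : ℝ := ((co U M).1 : ℝ) + ((co U M).2 : ℝ) * lam' U

theorem phi_eq (hU : IsHyperbolicGL2 U) (M : M2) (x y : ℚ)
    (hxy : Mr M = (x:ℝ) • 1 + (y:ℝ) • Mr (U:M2)) :
    phi U M = (x:ℝ) + (y:ℝ) * lam U ∧ phi' U M = (x:ℝ) + (y:ℝ) * lam' U := by
  rw [phi, phi', co_eq U hU M x y hxy]
  simp

theorem cayley : Mr (U:M2) * Mr (U:M2) = ((tZ U : ℝ)) • Mr (U:M2) - ((dZ U : ℝ)) • 1 := by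
  ext i j
  simp only [Mr, Matrix.map_apply, Matrix.mul_apply, Fin.sum_univ_two, Matrix.sub_apply,
    Matrix.smul_apply, Matrix.one_apply, smul_eq_mul, tZ, dZ, Matrix.trace_fin_two,
    Matrix.det_fin_two]
  fin_cases i <;> fin_cases j <;> norm_num <;> push_cast <;> ring

theorem decomp_mul (hU : IsHyperbolicGL2 U) (M N : M2) (x y x' y' : ℚ)
    (hM : Mr M = (x:ℝ) • 1 + (y:ℝ) • Mr (U:M2))
    (hN : Mr N = (x':ℝ) • 1 + (y':ℝ) • Mr (U:M2)) :
    Mr (M * N) = ((x*x' - y*y'*(dZ U) : ℚ) : ℝ) • 1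
      + ((x*y' + x'*y + y*y'*(tZ U) : ℚ) : ℝ) • Mr (U:M2) := by
  rw [Mr_mul, hM, hN]
  simp only [add_mul, mul_add, smul_mul_smul, one_mul, mul_one, cayley U, smul_sub, smul_smul]
  push_cast
  module

theorem phi_mul (hU : IsHyperbolicGL2 U) (M N : M2)
    (hM : M * (U:M2) = (U:M2) * M) (hN : N * (U:M2) = (U:M2) * N) :
    phi U (M * N) = phi U M * phi U N ∧ phi' U (M * N) = phi' U M * phi' U N := by
  obtain ⟨x, y, hMd⟩ := exists_decomp U hU M hM
  obtain ⟨x', y', hNd⟩ := exists_decomp U hU N hN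
  obtain ⟨hp1, hp2⟩ := phi_eq U hU M x y hMd
  obtain ⟨hq1, hq2⟩ := phi_eq U hU N x' y' hNd
  have hMN := decomp_mul U hU M N x y x' y' hMd hNd
  obtain ⟨hr1, hr2⟩ := phi_eq U hU (M * N) _ _ hMN
  constructor
  · rw [hr1, hp1, hq1]
    have hsq := lam_sq U hU
    push_cast
    linear_combination (-(y:ℝ)*(y':ℝ)) * hsq
  · rw [hr2, hp2, hq2]
    have hsq : lam' U ^ 2 = (tZ U : ℝ) * lam' U - (dZ U : ℝ) := by
      have h1 := lam_add U hU
      have h2 := lam_mul U hU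
      have : lam' U ^2 - (lam U + lam' U) * lam' U + lam U * lam' U = 0 := by ring
      rw [h1, h2] at this; linarith
    push_cast
    linear_combination (-(y:ℝ)*(y':ℝ)) * hsq

theorem phi_one (hU : IsHyperbolicGL2 U) : phi U 1 = 1 ∧ phi' U 1 = 1 := by
  have h : Mr 1 = ((1:ℚ):ℝ) • (1 : Matrix (Fin 2) (Fin 2) ℝ) + ((0:ℚ):ℝ) • Mr (U:M2) := by
    ext i j
    fin_cases i <;> fin_cases j <;> simp [Mr, Matrix.map_apply, Matrix.one_apply]
  obtain ⟨h1, h2⟩ := phi_eq U hU 1 1 0 h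
  rw [h1, h2]; norm_num

theorem phi_U (hU : IsHyperbolicGL2 U) : phi U (U:M2) = lam U ∧ phi' U (U:M2) = lam' U := by
  have h : Mr (U:M2) = ((0:ℚ):ℝ) • (1 : Matrix (Fin 2) (Fin 2) ℝ) + ((1:ℚ):ℝ) • Mr (U:M2) := by
    norm_num
  obtain ⟨h1, h2⟩ := phi_eq U hU (U:M2) 0 1 h
  rw [h1, h2]; norm_num

theorem phi_det (hU : IsHyperbolicGL2 U) (M : M2) (hcomm : M * (U:M2) = (U:M2) * M) :
    phi U M * phi' U M = (M.det : ℝ) := by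
  obtain ⟨x, y, hMd⟩ := exists_decomp U hU M hcomm
  obtain ⟨h1, h2⟩ := phi_eq U hU M x y hMd
  have hdet : (M.det : ℝ) = (Mr M).det := by
    rw [Matrix.det_fin_two, Matrix.det_fin_two]
    simp only [Mr, Matrix.map_apply]
    push_cast; ring
  rw [h1, h2, hdet, hMd]
  rw [Matrix.det_fin_two]
  simp only [Matrix.add_apply, Matrix.smul_apply, Matrix.one_apply, Mr, Matrix.map_apply,
    smul_eq_mul]
  norm_num
  have hs := lam_add U hU
  have hm := lam_mul U hU
  have htr : ((U:M2) 0 0 : ℝ) + ((U:M2) 1 1 : ℝ) = (tZ U : ℝ) := by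
    simp only [tZ, Matrix.trace_fin_two]; push_cast; ring
  have hdt : ((U:M2) 0 0 : ℝ) * ((U:M2) 1 1 : ℝ) - ((U:M2) 0 1 : ℝ) * ((U:M2) 1 0 : ℝ)
      = (dZ U : ℝ) := by
    simp only [dZ, Matrix.det_fin_two]; push_cast; ring
  linear_combination ((x:ℝ)*(y:ℝ)) * hs - ((x:ℝ)*(y:ℝ)) * htr + ((y:ℝ)*(y:ℝ)) * hm
    - ((y:ℝ)*(y:ℝ)) * hdt

theorem trace_formula (hU : IsHyperbolicGL2 U) (M : M2) (hcomm : M * (U:M2) = (U:M2) * M) :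
    (M.trace : ℝ) = phi U M + phi' U M := by
  obtain ⟨x, y, hMd⟩ := exists_decomp U hU M hcomm
  obtain ⟨h1, h2⟩ := phi_eq U hU M x y hMd
  have htr : (M.trace : ℝ) = (Mr M).trace := by
    rw [Matrix.trace_fin_two, Matrix.trace_fin_two]
    simp only [Mr, Matrix.map_apply]; push_cast; ring
  rw [h1, h2, htr, hMd]
  rw [Matrix.trace_fin_two]
  simp only [Matrix.add_apply, Matrix.smul_apply, Matrix.one_apply, Mr, Matrix.map_apply,
    smul_eq_mul]
  norm_num
  have hs := lam_add U hU
  have htr2 : ((U:M2) 0 0 : ℝ) + ((U:M2) 1 1 : ℝ) = (tZ U : ℝ) := by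
    simp only [tZ, Matrix.trace_fin_two]; push_cast; ring
  linear_combination ((y:ℝ)) * htr2 - ((y:ℝ)) * hs



/-- commuting at the level of units -/
def CommU (V : M2ˣ) : Prop := V * U = U * V

theorem commU_val {V : M2ˣ} (h : CommU U V) :
    (V:M2) * (U:M2) = (U:M2) * (V:M2) := by
  have := congrArg Units.val h
  simpa [Units.val_mul] using this

theorem commU_comm {V : M2ˣ} (hV : CommU U V) : Commute V U := hV

theorem commU_mul {V W : M2ˣ} (hV : CommU U V) (hW : CommU U W) : CommU U (V * W) :=
  Commute.mul_left (commU_comm U hV) (commU_comm U hW)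

theorem commU_inv {V : M2ˣ} (hV : CommU U V) : CommU U V⁻¹ :=
  Commute.inv_left (commU_comm U hV)

theorem commU_pow {V : M2ˣ} (hV : CommU U V) (k : ℕ) : CommU U (V ^ k) :=
  Commute.pow_left (commU_comm U hV) k

theorem commU_zpow {V : M2ˣ} (hV : CommU U V) (n : ℤ) : CommU U (V ^ n) :=
  Commute.zpow_left (commU_comm U hV) n

theorem det_unit (V : M2ˣ) : (V:M2).det = 1 ∨ (V:M2).det = -1 :=
  Int.isUnit_iff.mp ((Matrix.isUnit_iff_isUnit_det _).mp ⟨V, rfl⟩)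

theorem abs_phi_mul_abs_phi' (hU : IsHyperbolicGL2 U) {V : M2ˣ} (h : CommU U V) :
    |phi U (V:M2)| * |phi' U (V:M2)| = 1 := by
  rw [← abs_mul, phi_det U hU _ (commU_val U h)]
  rcases det_unit V with h1 | h1 <;> rw [h1] <;> norm_num

theorem phi_ne_zero (hU : IsHyperbolicGL2 U) {V : M2ˣ} (h : CommU U V) :
    phi U (V:M2) ≠ 0 := by
  intro h0
  have := abs_phi_mul_abs_phi' U hU h
  rw [h0] at this; simp at this

theorem phi'_ne_zero (hU : IsHyperbolicGL2 U) {V : M2ˣ} (h : CommU U V) :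
    phi' U (V:M2) ≠ 0 := by
  intro h0
  have := abs_phi_mul_abs_phi' U hU h
  rw [h0] at this; simp at this

theorem abs_phi_pos (hU : IsHyperbolicGL2 U) {V : M2ˣ} (h : CommU U V) :
    0 < |phi U (V:M2)| := abs_pos.mpr (phi_ne_zero U hU h)

theorem phi_inv (hU : IsHyperbolicGL2 U) {V : M2ˣ} (h : CommU U V) :
    phi U ((V⁻¹:M2ˣ):M2) = (phi U (V:M2))⁻¹ := by
  have hmul := (phi_mul U hU (V:M2) ((V⁻¹:M2ˣ):M2) (commU_val U h)
    (commU_val U (commU_inv U h))).1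
  have hone : (V:M2) * ((V⁻¹:M2ˣ):M2) = 1 := by
    rw [← Units.val_mul, mul_inv_cancel, Units.val_one]
  rw [hone, (phi_one U hU).1] at hmul
  exact eq_inv_of_mul_eq_one_right hmul.symm

theorem phi_pow (hU : IsHyperbolicGL2 U) {V : M2ˣ} (h : CommU U V) (k : ℕ) :
    phi U ((V ^ k : M2ˣ) : M2) = phi U (V:M2) ^ k := by
  induction k with
  | zero => simpa using (phi_one U hU).1
  | succ k ih =>
    have hmul := (phi_mul U hU ((V ^ k : M2ˣ) : M2) (V:M2)
      (commU_val U (commU_pow U h k)) (commU_val U h)).1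
    rw [pow_succ, pow_succ, ← ih, ← hmul, Units.val_mul]

theorem phi_zpow (hU : IsHyperbolicGL2 U) {V : M2ˣ} (h : CommU U V) (n : ℤ) :
    phi U ((V ^ n : M2ˣ) : M2) = phi U (V:M2) ^ n := by
  cases n with
  | ofNat k => simpa using phi_pow U hU h k
  | negSucc k =>
    rw [zpow_negSucc, zpow_negSucc]
    rw [phi_inv U hU (commU_pow U h (k+1)), phi_pow U hU h (k+1)]

theorem kernel (hU : IsHyperbolicGL2 U) {V : M2ˣ} (h : CommU U V)
    (habs : |phi U (V:M2)| = 1) : (V:M2) = 1 ∨ (V:M2) = -1 := by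
  obtain ⟨x, y, hxy⟩ := exists_decomp U hU (V:M2) (commU_val U h)
  obtain ⟨h1, h2⟩ := phi_eq U hU (V:M2) x y hxy
  have hy : y = 0 := by
    by_contra hy
    have hyR : (y:ℝ) ≠ 0 := by exact_mod_cast hy
    have hphipm : phi U (V:M2) = 1 ∨ phi U (V:M2) = -1 := by
      rcases abs_eq (by norm_num : (0:ℝ) ≤ 1) |>.mp habs with h | h
      · exact Or.inl h
      · exact Or.inr h
    apply lam_irr U hU
    rcases hphipm with hp | hp
    · exact ⟨(1 - x)/y, by rw [hp] at h1; push_cast; field_simp; linarith [h1]⟩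
    · exact ⟨(-1 - x)/y, by rw [hp] at h1; push_cast; field_simp; linarith [h1]⟩
  rw [hy] at hxy h1
  push_cast at hxy h1
  simp only [zero_mul, add_zero, zero_smul] at hxy h1
  have hxpm : (x:ℝ) = 1 ∨ (x:ℝ) = -1 := by
    rw [h1] at habs
    rcases abs_eq (by norm_num : (0:ℝ) ≤ 1) |>.mp habs with h' | h'
    · exact Or.inl h'
    · exact Or.inr h'
  rcases hxpm with hx | hx
  · left
    ext i j
    have := congrFun (congrFun hxy i :) j
    simp only [Mr, Matrix.map_apply, Matrix.smul_apply, Matrix.one_apply, smul_eq_mul, hx] at this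
    by_cases hij : i = j
    · subst hij; simp at this ⊢; exact_mod_cast this
    · simp [Matrix.one_apply, hij] at this ⊢; exact_mod_cast this
  · right
    ext i j
    have := congrFun (congrFun hxy i :) j
    simp only [Mr, Matrix.map_apply, Matrix.smul_apply, Matrix.one_apply, smul_eq_mul, hx] at this
    by_cases hij : i = j
    · subst hij; simp at this ⊢; exact_mod_cast this
    · simp [Matrix.one_apply, hij] at this ⊢; exact_mod_cast this

theorem roots_comm (hU : IsHyperbolicGL2 U) {V : M2ˣ} (h : CommU U V) (z : ℂ)
    (hz : (((V : M2)).map (Int.cast : ℤ → ℂ)).charpoly.IsRoot z) :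
    z = ((phi U (V:M2) : ℝ) : ℂ) ∨ z = ((phi' U (V:M2) : ℝ) : ℂ) := by
  rw [root_iff] at hz
  have htr : ((V:M2).trace : ℂ) = ((phi U (V:M2) : ℝ) : ℂ) + ((phi' U (V:M2) : ℝ) : ℂ) := by
    rw [show ((V:M2).trace : ℂ) = (((((V:M2).trace : ℤ)) : ℝ) : ℂ) by push_cast; ring]
    rw [trace_formula U hU _ (commU_val U h)]
    push_cast; ring
  have hdt : ((V:M2).det : ℂ) = ((phi U (V:M2) : ℝ) : ℂ) * ((phi' U (V:M2) : ℝ) : ℂ) := by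
    rw [show ((V:M2).det : ℂ) = (((((V:M2).det : ℤ)) : ℝ) : ℂ) by exact (Complex.ofReal_intCast _).symm]
    rw [← phi_det U hU _ (commU_val U h)]
    push_cast; ring
  have hfac : (z - ((phi U (V:M2) : ℝ) : ℂ)) * (z - ((phi' U (V:M2) : ℝ) : ℂ)) = 0 := by
    rw [htr, hdt] at hz
    linear_combination hz
  rcases mul_eq_zero.mp hfac with h' | h'
  · left; exact sub_eq_zero.mp h'
  · right; exact sub_eq_zero.mp h'

theorem hyp_iff_abs_phi (hU : IsHyperbolicGL2 U) {V : M2ˣ} (h : CommU U V) :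
    IsHyperbolicGL2 V ↔ |phi U (V:M2)| ≠ 1 := by
  constructor
  · intro hV hone
    have hroot : (((V : M2)).map (Int.cast : ℤ → ℂ)).charpoly.IsRoot
        ((phi U (V:M2) : ℝ) : ℂ) := by
      rw [root_iff]
      obtain ⟨x, y, hxy⟩ := exists_decomp U hU (V:M2) (commU_val U h)
      obtain ⟨h1, h2⟩ := phi_eq U hU (V:M2) x y hxy
      have htr : ((V:M2).trace : ℝ) = phi U (V:M2) + phi' U (V:M2) :=
        trace_formula U hU _ (commU_val U h)
      have hdt : phi U (V:M2) * phi' U (V:M2) = ((V:M2).det : ℝ) :=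
        phi_det U hU _ (commU_val U h)
      have hkey : phi U (V:M2)^2 - ((V:M2).trace : ℝ) * phi U (V:M2) + ((V:M2).det : ℝ) = 0 := by
        rw [htr, ← hdt]; ring
      have h2 := congrArg Complex.ofReal hkey
      simp only [Complex.ofReal_add, Complex.ofReal_sub, Complex.ofReal_mul, Complex.ofReal_pow,
        Complex.ofReal_intCast, Complex.ofReal_zero] at h2
      exact h2
    have := hV _ hroot
    rw [Complex.norm_real, Real.norm_eq_abs] at this
    exact this hone
  · intro hone z hz
    have habs' : |phi' U (V:M2)| ≠ 1 := by
      intro h1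
      have := abs_phi_mul_abs_phi' U hU h
      rw [h1, mul_one] at this
      exact hone this
    rcases roots_comm U hU h z hz with h' | h' <;> rw [h', Complex.norm_real, Real.norm_eq_abs]
    · exact hone
    · exact habs'



def EE : ℝ := |((U:M2) 0 0 : ℝ)| + |((U:M2) 0 1 : ℝ)| + |((U:M2) 1 0 : ℝ)| + |((U:M2) 1 1 : ℝ)|

def RR : ℝ := 3 + (6 / sd U) * (|lam U| + EE U)

theorem entry_bound (hU : IsHyperbolicGL2 U) {V : M2ˣ} (h : CommU U V)
    (h1 : 1 < |phi U (V:M2)|) (h3 : |phi U (V:M2)| ≤ 3) :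
    ∀ i j, |((V:M2) i j : ℝ)| ≤ RR U := by
  intro i j
  have hsd := sd_pos U hU
  have hprod := abs_phi_mul_abs_phi' U hU h
  have hphi'3 : |phi' U (V:M2)| ≤ 3 := by
    nlinarith [abs_nonneg (phi' U (V:M2)), hprod, h1]
  obtain ⟨x, y, hxy⟩ := exists_decomp U hU (V:M2) (commU_val U h)
  obtain ⟨hp, hp'⟩ := phi_eq U hU (V:M2) x y hxy
  have hysd : (y:ℝ) * sd U = phi U (V:M2) - phi' U (V:M2) := by
    rw [hp, hp', ← lam_sub U]; ring
  have hy6 : |(y:ℝ)| * sd U ≤ 6 := by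
    have : |(y:ℝ) * sd U| ≤ |phi U (V:M2)| + |phi' U (V:M2)| := by
      rw [hysd]; exact abs_sub _ _
    rw [abs_mul, abs_of_pos hsd] at this
    linarith [this, h3, hphi'3]
  have hy : |(y:ℝ)| ≤ 6 / sd U := by
    rw [le_div_iff₀ hsd]; exact hy6
  have hx : |(x:ℝ)| ≤ 3 + (6 / sd U) * |lam U| := by
    have hxeq : (x:ℝ) = phi U (V:M2) - y * lam U := by rw [hp]; ring
    have : |(x:ℝ)| ≤ |phi U (V:M2)| + |(y:ℝ)| * |lam U| := by
      rw [hxeq, ← abs_mul]; exact abs_sub _ _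
    have h2 : |(y:ℝ)| * |lam U| ≤ (6 / sd U) * |lam U| :=
      mul_le_mul_of_nonneg_right hy (abs_nonneg _)
    linarith [this, h3, h2]
  have hent := congrFun (congrFun hxy i :) j
  simp only [Mr, Matrix.map_apply, Matrix.add_apply, Matrix.smul_apply, Matrix.one_apply,
    smul_eq_mul] at hent
  have hUij : |((U:M2) i j : ℝ)| ≤ EE U := by
    fin_cases i <;> fin_cases j <;>
      simp only [EE, Fin.mk_zero, Fin.mk_one, Fin.isValue] <;>
      linarith [abs_nonneg (((U:M2) 0 0 : ℝ)), abs_nonneg (((U:M2) 0 1 : ℝ)),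
        abs_nonneg (((U:M2) 1 0 : ℝ)), abs_nonneg (((U:M2) 1 1 : ℝ))]
  have hyE : |(y:ℝ)| * |((U:M2) i j : ℝ)| ≤ (6 / sd U) * EE U := by
    apply mul_le_mul hy hUij (abs_nonneg _)
    positivity
  by_cases hij : i = j
  · rw [if_pos hij] at hent
    have : |((V:M2) i j : ℝ)| ≤ |(x:ℝ)| + |(y:ℝ)| * |((U:M2) i j : ℝ)| := by
      rw [hent, mul_one, ← abs_mul]
      exact abs_add_le _ _
    simp only [RR]
    nlinarith [this, hx, hyE]
  · rw [if_neg hij] at hent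
    have : |((V:M2) i j : ℝ)| ≤ |(y:ℝ)| * |((U:M2) i j : ℝ)| := by
      rw [hent, mul_zero, zero_add, ← abs_mul]
    simp only [RR]
    nlinarith [this, hyE, hx, abs_nonneg ((x:ℝ))]

/-- the additive subgroup of `ℝ` of logarithms of `|φ|` over the centralizer of `U` -/
def SG (hU : IsHyperbolicGL2 U) : AddSubgroup ℝ where
  carrier := {r | ∃ V : M2ˣ, CommU U V ∧ Real.log |phi U (V:M2)| = r}
  zero_mem' := by
    refine ⟨1, (by rw [one_mul, mul_one] : (1:M2ˣ) * U = U * 1), ?_⟩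
    rw [Units.val_one, (phi_one U hU).1]
    norm_num
  add_mem' := by
    rintro r s ⟨V, hV, rfl⟩ ⟨W, hW, rfl⟩
    refine ⟨V * W, commU_mul U hV hW, ?_⟩
    rw [Units.val_mul, (phi_mul U hU _ _ (commU_val U hV) (commU_val U hW)).1, abs_mul,
      Real.log_mul (abs_phi_pos U hU hV).ne' (abs_phi_pos U hU hW).ne']
  neg_mem' := by
    rintro r ⟨V, hV, rfl⟩
    refine ⟨V⁻¹, commU_inv U hV, ?_⟩
    rw [phi_inv U hU hV, abs_inv, Real.log_inv]

theorem SG_inter_finite (hU : IsHyperbolicGL2 U) :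
    (((SG U hU : Set ℝ)) ∩ Set.Ioc (0:ℝ) 1).Finite := by
  classical
  set N : ℤ := ⌈RR U⌉ with hN
  set P : Set (Fin 2 → Fin 2 → ℤ) :=
    Set.pi Set.univ (fun _ : Fin 2 => Set.pi Set.univ (fun _ : Fin 2 => Set.Icc (-N) N)) with hP
  have hPfin : P.Finite :=
    Set.Finite.pi (fun i => Set.Finite.pi (fun j => Set.finite_Icc _ _))
  set T : Set M2ˣ := {V : M2ˣ | CommU U V ∧ Real.log |phi U (V:M2)| ∈ Set.Ioc (0:ℝ) 1} with hT
  have hTsub : (fun (V : M2ˣ) => (fun i j => (V:M2) i j : Fin 2 → Fin 2 → ℤ)) '' T ⊆ P := by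
    rintro _ ⟨V, ⟨hVc, hVlog⟩, rfl⟩
    intro i _
    intro j _
    simp only [Set.mem_Icc]
    obtain ⟨hl0, hl1⟩ := hVlog
    have hpos := abs_phi_pos U hU hVc
    have hexp : |phi U (V:M2)| = Real.exp (Real.log |phi U (V:M2)|) :=
      (Real.exp_log hpos).symm
    have h1 : 1 < |phi U (V:M2)| := by
      rw [hexp]
      calc (1:ℝ) = Real.exp 0 := by norm_num
      _ < Real.exp (Real.log |phi U (V:M2)|) := Real.exp_lt_exp.mpr hl0
    have h3 : |phi U (V:M2)| ≤ 3 := by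
      rw [hexp]
      calc Real.exp (Real.log |phi U (V:M2)|) ≤ Real.exp 1 := Real.exp_le_exp.mpr hl1
      _ ≤ 3 := by linarith [Real.exp_one_lt_d9]
    have hb := entry_bound U hU hVc h1 h3 i j
    have hbN : |((V:M2) i j : ℝ)| ≤ (N : ℝ) := le_trans hb (by rw [hN]; exact_mod_cast Int.le_ceil _)
    have : |(V:M2) i j| ≤ N := by exact_mod_cast (by rwa [← Int.cast_abs] at hbN : ((|(V:M2) i j| : ℤ) : ℝ) ≤ (N:ℝ))
    constructor <;> linarith [abs_le.mp this |>.1, abs_le.mp this |>.2]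
  have hTfin : T.Finite := by
    apply Set.Finite.of_finite_image (hPfin.subset hTsub)
    intro V _ W _ hVW
    have : (V : M2) = (W : M2) := by
      ext i j
      exact congrFun (congrFun hVW i) j
    exact Units.ext this
  apply Set.Finite.subset (hTfin.image (fun V : M2ˣ => Real.log |phi U ((V:M2ˣ):M2)|))
  rintro r ⟨⟨V, hVc, rfl⟩, hr⟩
  exact ⟨V, ⟨hVc, hr⟩, rfl⟩

theorem SG_not_dense (hU : IsHyperbolicGL2 U) : ¬ Dense ((SG U hU : Set ℝ)) := by
  intro hd
  have hex : ∀ n : ℕ, ∃ r, r ∈ (SG U hU : Set ℝ) ∧ r ∈ Set.Ioo ((1:ℝ)/(n+2)) (1/(n+1)) := by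
    intro n
    have hne : (Set.Ioo ((1:ℝ)/(n+2)) (1/(n+1))).Nonempty := by
      apply Set.nonempty_Ioo.mpr
      apply one_div_lt_one_div_of_lt <;> push_cast <;> linarith [Nat.cast_nonneg (α := ℝ) n]
    exact hd.exists_mem_open isOpen_Ioo hne
  choose f hfS hfI using hex
  have hmem : ∀ n, f n ∈ ((SG U hU : Set ℝ)) ∩ Set.Ioc (0:ℝ) 1 := by
    intro n
    obtain ⟨hl, hr⟩ := hfI n
    refine ⟨hfS n, ?_, ?_⟩
    · have : (0:ℝ) < 1/(n+2) := by positivity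
      linarith
    · have : (1:ℝ)/(n+1) ≤ 1 := by
        rw [div_le_one (by positivity)]
        linarith [Nat.cast_nonneg (α := ℝ) n]
      linarith
  have hanti : StrictAnti f := by
    intro m n hmn
    obtain ⟨hl1, hr1⟩ := hfI m
    obtain ⟨hl2, hr2⟩ := hfI n
    have key : (1:ℝ)/(n+1) ≤ 1/(m+2) := by
      apply one_div_le_one_div_of_le (by positivity)
      push_cast
      have : (m:ℝ) + 1 ≤ n := by exact_mod_cast Nat.succ_le_of_lt hmn
      linarith
    linarith
  exact Set.infinite_of_injective_forall_mem hanti.injective hmem (SG_inter_finite U hU)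



theorem log_abs_phi_ne_zero_iff (hU : IsHyperbolicGL2 U) {V : M2ˣ} (h : CommU U V) :
    Real.log |phi U (V:M2)| = 0 ↔ |phi U (V:M2)| = 1 := by
  constructor
  · intro h0
    have hpos := abs_phi_pos U hU h
    have := Real.exp_log hpos
    rw [h0, Real.exp_zero] at this
    exact this.symm
  · intro h1; rw [h1, Real.log_one]

theorem commuting_case (m : ℕ) (hm : 1 ≤ m) (A : Fin m → M2ˣ)
    (hhyp : ∀ i, IsHyperbolicGL2 (A i))
    (hc : ∀ i j, A i * A j = A j * A i) :
    ∃ B : M2ˣ, IsHyperbolicGL2 B ∧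
      ∃ (n : Fin m → ℤ) (ε : Fin m → ℤ),
        (∀ i, n i ≠ 0) ∧ (∀ i, ε i = 1 ∨ ε i = -1) ∧
        ∀ i, (A i : M2) = ε i • (↑(B ^ (n i)) : M2) := by
  classical
  set i₀ : Fin m := ⟨0, hm⟩ with hi₀
  set U : M2ˣ := A i₀ with hUdef
  have hU : IsHyperbolicGL2 U := hhyp i₀
  -- the subgroup is cyclic
  obtain ⟨a, hSa⟩ := (AddSubgroup.dense_or_cyclic (SG U hU)).resolve_left (SG_not_dense U hU)
  -- a ≠ 0 because U itself gives a nonzero element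
  have hUcomm : CommU U U := rfl
  have hUmem : Real.log |phi U (U:M2)| ∈ SG U hU := ⟨U, hUcomm, rfl⟩
  have hUlog : Real.log |phi U (U:M2)| ≠ 0 := fun h0 =>
    abs_lam_ne_one U hU (by
      rw [← (phi_U U hU).1]
      exact (log_abs_phi_ne_zero_iff U hU hUcomm).mp h0)
  have ha0 : a ≠ 0 := by
    intro h0
    rw [hSa, h0] at hUmem
    obtain ⟨k, hk⟩ := AddSubgroup.mem_closure_singleton.mp hUmem
    rw [smul_zero] at hk
    exact hUlog hk.symm
  -- get the generator B
  have haS : a ∈ SG U hU := by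
    rw [hSa]
    exact AddSubgroup.subset_closure (Set.mem_singleton a)
  obtain ⟨B, hBcomm, hBlog⟩ := haS
  have hB : IsHyperbolicGL2 B := by
    rw [hyp_iff_abs_phi U hU hBcomm]
    intro h1
    apply ha0
    rw [← hBlog, log_abs_phi_ne_zero_iff U hU hBcomm]
    exact h1
  -- exponents
  have hAcomm : ∀ i, CommU U (A i) := fun i => hc i i₀
  have hmem : ∀ i, ∃ k : ℤ, k • a = Real.log |phi U ((A i : M2ˣ):M2)| := by
    intro i
    have : Real.log |phi U ((A i : M2ˣ):M2)| ∈ SG U hU := ⟨A i, hAcomm i, rfl⟩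
    rw [hSa] at this
    exact AddSubgroup.mem_closure_singleton.mp this
  choose n hn using hmem
  -- the log of the power
  have hpowlog : ∀ i, Real.log |phi U ((B ^ (n i) : M2ˣ) : M2)| = (n i) • a := by
    intro i
    rw [phi_zpow U hU hBcomm (n i), Real.log_abs, Real.log_zpow,
      ← Real.log_abs (phi U (B:M2)), hBlog, zsmul_eq_mul]
  -- the quotient is in the kernel
  have hker : ∀ i, ((A i * (B ^ (n i))⁻¹ : M2ˣ) : M2) = 1
      ∨ ((A i * (B ^ (n i))⁻¹ : M2ˣ) : M2) = -1 := by
    intro i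
    have hWcomm : CommU U (A i * (B ^ (n i))⁻¹) :=
      commU_mul U (hAcomm i) (commU_inv U (commU_zpow U hBcomm (n i)))
    apply kernel U hU hWcomm
    have hphiW : phi U ((A i * (B ^ (n i))⁻¹ : M2ˣ) : M2)
        = phi U ((A i : M2ˣ):M2) * (phi U ((B ^ (n i) : M2ˣ) : M2))⁻¹ := by
      rw [Units.val_mul,
        (phi_mul U hU _ _ (commU_val U (hAcomm i))
          (commU_val U (commU_inv U (commU_zpow U hBcomm (n i))))).1,
        phi_inv U hU (commU_zpow U hBcomm (n i))]
    have hlogW : Real.log |phi U ((A i * (B ^ (n i))⁻¹ : M2ˣ) : M2)| = 0 := by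
      rw [hphiW, abs_mul, abs_inv,
        Real.log_mul (abs_phi_pos U hU (hAcomm i)).ne'
          (by
            have := abs_phi_pos U hU (commU_zpow U hBcomm (n i))
            positivity),
        Real.log_inv, ← hn i, hpowlog i]
      ring
    rwa [log_abs_phi_ne_zero_iff U hU hWcomm] at hlogW
  classical
  set ε : Fin m → ℤ := fun i => if ((A i * (B ^ (n i))⁻¹ : M2ˣ) : M2) = 1 then 1 else -1 with hεdef
  refine ⟨B, hB, n, ε, ?_, ?_, ?_⟩
  · -- n i ≠ 0
    intro i hni
    have hAhyp : |phi U ((A i : M2ˣ):M2)| ≠ 1 :=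
      (hyp_iff_abs_phi U hU (hAcomm i)).mp (hhyp i)
    apply hAhyp
    rw [← log_abs_phi_ne_zero_iff U hU (hAcomm i), ← hn i, hni, zero_smul]
  · intro i
    by_cases h1 : ((A i * (B ^ (n i))⁻¹ : M2ˣ) : M2) = 1
    · left; simp only [hεdef]; rw [if_pos h1]
    · right; simp only [hεdef]; rw [if_neg h1]
  · intro i
    have hfact : (A i : M2) = ((A i * (B ^ (n i))⁻¹ : M2ˣ) : M2) * ((B ^ (n i) : M2ˣ) : M2) := by
      rw [← Units.val_mul, inv_mul_cancel_right]
    by_cases h1 : ((A i * (B ^ (n i))⁻¹ : M2ˣ) : M2) = 1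
    · simp only [hεdef]
      rw [if_pos h1, hfact, h1, one_mul, one_smul]
    · rcases hker i with h2 | h2
      · exact absurd h2 h1
      · simp only [hεdef]
        rw [if_neg h1, hfact, h2]
        simp

end HGL55

/-- For hyperbolic `A₁, …, A_m ∈ GL(2,ℤ)` exactly one of the
following holds: either some pair does not commute, or all pairwise commute and
there are a hyperbolic `B ∈ GL(2,ℤ)`, nonzero integers `nᵢ` and signs `εᵢ = ±1`
with `Aᵢ = εᵢ·B^{nᵢ}` for every `i`. -/
theorem hyperbolic_gl2z_family_dichotomy
    (m : ℕ) (hm : 1 ≤ m)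
    (A : Fin m → (Matrix (Fin 2) (Fin 2) ℤ)ˣ)
    (hhyp : ∀ i, IsHyperbolicGL2 (A i)) :
    Xor' (∃ i j, i ≠ j ∧ A i * A j ≠ A j * A i)
      ((∀ i j, A i * A j = A j * A i) ∧
        ∃ B : (Matrix (Fin 2) (Fin 2) ℤ)ˣ, IsHyperbolicGL2 B ∧
          ∃ (n : Fin m → ℤ) (ε : Fin m → ℤ),
            (∀ i, n i ≠ 0) ∧ (∀ i, ε i = 1 ∨ ε i = -1) ∧
            ∀ i, (A i : Matrix (Fin 2) (Fin 2) ℤ) =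
              ε i • (↑(B ^ (n i)) : Matrix (Fin 2) (Fin 2) ℤ)) := by
  by_cases hcall : ∀ i j, A i * A j = A j * A i
  · refine Or.inr ⟨⟨hcall, ?_⟩, ?_⟩
    · obtain ⟨B, hB, n, ε, hn, hε, heq⟩ := HGL55.commuting_case m hm A hhyp hcall
      exact ⟨B, hB, n, ε, hn, hε, heq⟩
    · rintro ⟨i, j, hij, hne⟩
      exact hne (hcall i j)
  · left
    push_neg at hcall
    obtain ⟨i, j, hne⟩ := hcall
    have hij : i ≠ j := by
      intro h
      subst h
      exact hne rfl
    exact ⟨⟨i, j, hij, hne⟩, fun hb => hne (hb.1 i j)⟩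


end
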